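/- arXiv:math-ph/0512051 — 5 statements merged into one kernel-verified Lean document; each statement's English description precedes it below -/
import Mathlib

section
/- Let n : ℕ, let γ : Matrix (Fin n) (Fin n) ℂ → ℂ be differentiable, and let G : Matrix (Fin n) (Fin n) ℂ → Matrix (Fin n) (Fin n) ℂ be a trace-gradient of γ, i.e. for all ρ σ, (fderiv ℂ γ ρ) σ = Matrix.trace (σ * G ρ). If ρ : ℝ → Matrix (Fin n) (Fin n) ℂ is differentiable and satisfies ρ'(t) = Complex.I • (ρ(t) * G (ρ t) − G (ρ t) * ρ(t)) for all t, then the Hamiltonian functional is an integral of motion: γ (ρ t) = γ (ρ t₀) for all t₀ t. -/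
attribute [local instance] Matrix.normedAddCommGroup Matrix.normedSpace

/-- The Hamiltonian functional `γ` is an integral of motion of the Vlasov (von Neumann)
equation `ρ'(t) = i • (ρ(t) G(ρ t) − G(ρ t) ρ(t))`, where `G` is a trace-gradient of `γ`. -/
theorem hamiltonian_constant_of_vlasov (n : ℕ)
    (γ : Matrix (Fin n) (Fin n) ℂ → ℂ)
    (G : Matrix (Fin n) (Fin n) ℂ → Matrix (Fin n) (Fin n) ℂ)
    (hγ : Differentiable ℂ γ)
    (hG : ∀ ρ σ : Matrix (Fin n) (Fin n) ℂ, (fderiv ℂ γ ρ) σ = Matrix.trace (σ * G ρ))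
    (ρ : ℝ → Matrix (Fin n) (Fin n) ℂ)
    (hρ : Differentiable ℝ ρ)
    (heq : ∀ t : ℝ, deriv ρ t = Complex.I • (ρ t * G (ρ t) - G (ρ t) * ρ t)) :
    ∀ t₀ t : ℝ, γ (ρ t) = γ (ρ t₀) := by
  intro t₀ t
  have key : ∀ s : ℝ, HasDerivAt (fun u => γ (ρ u)) 0 s := by
    intro s
    have h1 : HasDerivAt ρ (deriv ρ s) s := (hρ s).hasDerivAt
    have h2 := ((hγ (ρ s)).hasFDerivAt.restrictScalars ℝ).comp_hasDerivAt s h1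
    have : (fderiv ℂ γ (ρ s)) (deriv ρ s) = 0 := by
      rw [hG, heq]
      rw [Matrix.smul_mul, Matrix.trace_smul, Matrix.sub_mul, Matrix.trace_sub,
        Matrix.mul_assoc, Matrix.mul_assoc, Matrix.trace_mul_comm (G (ρ s))]
      simp [Matrix.mul_assoc]
    exact h2.congr_deriv this
  have := is_const_of_deriv_eq_zero (f := fun u => γ (ρ u))
    (fun s => (key s).differentiableAt) (fun s => (key s).deriv) t t₀
  exact this
end

section
/- Let n : ℕ, let γ, α : Matrix (Fin n) (Fin n) ℂ → ℂ be differentiable with trace-gradients G resp. A (i.e. for all ρ σ, (fderiv ℂ γ ρ) σ = Matrix.trace (σ * G ρ) and (fderiv ℂ α ρ) σ = Matrix.trace (σ * A ρ)). If ρ : ℝ → Matrix (Fin n) (Fin n) ℂ is differentiable and satisfies the Vlasov (von Neumann) equation ρ'(t) = Complex.I • (ρ(t) * G (ρ t) − G (ρ t) * ρ(t)) for all t, then for all t the composite t ↦ α (ρ t) is differentiable and d/dt α (ρ t) = Complex.I * Matrix.trace (ρ t * (G (ρ t) * A (ρ t) − A (ρ t) * G (ρ t))). -/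
attribute [local instance] Matrix.normedAddCommGroup Matrix.normedSpace

/-- Along solutions of the Vlasov (von Neumann) equation, every differentiable functional `α`
with trace-gradient `A` evolves by the classical Poisson bracket:
`d/dt α(ρ t) = i · Tr(ρ t · [G(ρ t), A(ρ t)])`. -/
theorem poisson_evolution_of_vlasov (n : ℕ)
    (γ α : Matrix (Fin n) (Fin n) ℂ → ℂ)
    (G A : Matrix (Fin n) (Fin n) ℂ → Matrix (Fin n) (Fin n) ℂ)
    (hγ : Differentiable ℂ γ) (hα : Differentiable ℂ α)
    (hG : ∀ ρ σ : Matrix (Fin n) (Fin n) ℂ, (fderiv ℂ γ ρ) σ = Matrix.trace (σ * G ρ))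
    (hA : ∀ ρ σ : Matrix (Fin n) (Fin n) ℂ, (fderiv ℂ α ρ) σ = Matrix.trace (σ * A ρ))
    (ρ : ℝ → Matrix (Fin n) (Fin n) ℂ)
    (hρ : Differentiable ℝ ρ)
    (heq : ∀ t : ℝ, deriv ρ t = Complex.I • (ρ t * G (ρ t) - G (ρ t) * ρ t)) :
    ∀ t : ℝ, HasDerivAt (fun s => α (ρ s))
      (Complex.I * Matrix.trace (ρ t * (G (ρ t) * A (ρ t) - A (ρ t) * G (ρ t)))) t := by
  intro t
  have hρt : HasDerivAt ρ (deriv ρ t) t := (hρ t).hasDerivAt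
  have hαt : HasFDerivAt α (fderiv ℂ α (ρ t)) (ρ t) := (hα (ρ t)).hasFDerivAt
  have h := (hαt.restrictScalars ℝ).comp_hasDerivAt t hρt
  convert h using 1
  · rfl
  · rfl
  change _ = (fderiv ℂ α (ρ t)) (deriv ρ t)
  rw [hA, heq, Matrix.smul_mul,
    Matrix.trace_smul, smul_eq_mul]
  congr 1
  rw [Matrix.sub_mul, Matrix.mul_sub, Matrix.trace_sub, Matrix.trace_sub,
    mul_assoc, mul_assoc]
  congr 1
  rw [← mul_assoc, Matrix.trace_mul_cycle]
  rw [mul_assoc]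
end

section
/- Let E be a complex Hilbert space (a complete InnerProductSpace over ℂ). For ψ ∈ E define the outer product operator outer ψ : E →L[ℂ] E by (outer ψ) χ = ⟪ψ, χ⟫ • ψ. Let H : ℝ × (E →L[ℂ] E) → (E →L[ℂ] E) be any function, let φ ∈ E, let ω : ℝ → ℝ be continuous, let t₀ ∈ ℝ, and assume the stationarity (eigenvector) condition H (t, outer φ) φ = (ω t : ℂ) • φ holds for all t. Then the function ψ : ℝ → E defined by ψ t = Complex.exp (−Complex.I * (∫ s in t₀..t, ω s)) • φ satisfies ψ t₀ = φ and solves the abstract Hartree equation: for every t, ψ is differentiable at t with ψ'(t) = −Complex.I • H (t, outer (ψ t)) (ψ t). -/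
open scoped InnerProductSpace

/-- The outer product `ψψ*`: the rank-one operator `χ ↦ ⟪ψ, χ⟫ • ψ`. -/
noncomputable def outer {E : Type*} [NormedAddCommGroup E] [InnerProductSpace ℂ E]
    (ψ : E) : E →L[ℂ] E :=
  (innerSL ℂ ψ).smulRight ψ

/-- If `φ` satisfies the stationarity condition `H(t, φφ*) φ = ω(t) • φ` for all `t`, then
`ψ t = exp(−i ∫_{t₀}^t ω) • φ` is a soliton-type solution of the abstract Hartree equation
`ψ' = −i H(t, ψψ*) ψ` with `ψ t₀ = φ`. -/
theorem soliton_solves_hartree {E : Type*} [NormedAddCommGroup E] [InnerProductSpace ℂ E]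
    [CompleteSpace E]
    (H : ℝ × (E →L[ℂ] E) → (E →L[ℂ] E)) (φ : E) (ω : ℝ → ℝ) (t₀ : ℝ)
    (hω : Continuous ω)
    (hstat : ∀ t : ℝ, H (t, outer φ) φ = (ω t : ℂ) • φ) :
    (fun t : ℝ => Complex.exp (-Complex.I * ((∫ s in t₀..t, ω s : ℝ) : ℂ)) • φ) t₀ = φ ∧
      ∀ t : ℝ, HasDerivAt
        (fun t : ℝ => Complex.exp (-Complex.I * ((∫ s in t₀..t, ω s : ℝ) : ℂ)) • φ)
        ((-Complex.I) • H (t, outer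
            (Complex.exp (-Complex.I * ((∫ s in t₀..t, ω s : ℝ) : ℂ)) • φ))
          (Complex.exp (-Complex.I * ((∫ s in t₀..t, ω s : ℝ) : ℂ)) • φ)) t := by
  have houter : ∀ c : ℂ, ‖c‖ = 1 → outer (c • φ) = outer φ := by
    intro c hc
    ext χ
    simp only [outer, ContinuousLinearMap.smulRight_apply, innerSL_apply_apply, inner_smul_left,
      smul_smul]
    rw [mul_comm (starRingEnd ℂ c), mul_assoc, ← Complex.normSq_eq_conj_mul_self,
      Complex.normSq_eq_norm_sq, hc]
    simp
  refine ⟨by simp, fun t => ?_⟩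
  have hc : ‖Complex.exp (-Complex.I * ((∫ s in t₀..t, ω s : ℝ) : ℂ))‖ = 1 := by
    rw [Complex.norm_exp]
    simp
  have hint : HasDerivAt (fun t : ℝ => (∫ s in t₀..t, ω s : ℝ)) (ω t) t :=
    (hω.integral_hasStrictDerivAt t₀ t).hasDerivAt
  have hexp : HasDerivAt (fun t : ℝ => Complex.exp (-Complex.I * ((∫ s in t₀..t, ω s : ℝ) : ℂ)))
      (Complex.exp (-Complex.I * ((∫ s in t₀..t, ω s : ℝ) : ℂ)) * (-Complex.I * (ω t : ℂ))) t := by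
    have h1 : HasDerivAt (fun t : ℝ => (((∫ s in t₀..t, ω s : ℝ) : ℂ))) ((ω t : ℂ)) t :=
      hint.ofReal_comp
    have h2 := (h1.const_mul (-Complex.I)).cexp
    convert h2 using 1
  have hd := hexp.smul_const φ
  rw [houter _ hc, ContinuousLinearMap.map_smul, hstat t]
  convert hd using 1
  rw [smul_smul, smul_smul]
  congr 1
  ring
end

section
/- Let E be a complex Hilbert space (a complete InnerProductSpace over ℂ). For ψ ∈ E define the outer product operator outer ψ : E →L[ℂ] E by (outer ψ) χ = ⟪ψ, χ⟫ • ψ. Let k : ℕ, let P : Fin k → (E →L[ℂ] E) be a family of self-adjoint operators that pairwise commute (P i ∘L P j = P j ∘L P i for all i j), let ν : Fin k → ℝ → ℝ be continuous functions, let t₀ ∈ ℝ, let φ ∈ E, and let H : ℝ × (E →L[ℂ] E) → (E →L[ℂ] E) be any function. For c : Fin k → ℝ write V c := exp (−Complex.I • (Σ_j (c j : ℂ) • P j)) (the exponential in the Banach algebra E →L[ℂ] E). Assume: (i) for all t, H (t, outer φ) φ = Σ_j (ν j t : ℂ) • (P j) φ; (ii) equivariance: for all t and all c : Fin k → ℝ,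 H (t, (V c) ∘L (outer φ) ∘L (ContinuousLinearMap.adjoint (V c))) ((V c) φ) = (V c) (H (t, outer φ) φ). Then ψ : ℝ → E defined by ψ t = V (fun j => ∫ s in t₀..t, ν j s) φ satisfies ψ t₀ = φ and solves the abstract Hartree equation: for every t, ψ is differentiable at t with ψ'(t) = −Complex.I • H (t, outer (ψ t)) (ψ t). -/
open scoped InnerProductSpace

/-- The unitary group generated by the commuting family `P`:
`V c = exp(−i Σ_j c_j P_j)` in the Banach algebra `E →L[ℂ] E`. -/
noncomputable def Vop {E : Type*} [NormedAddCommGroup E] [InnerProductSpace ℂ E]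
    [CompleteSpace E] {k : ℕ} (P : Fin k → (E →L[ℂ] E)) (c : Fin k → ℝ) : E →L[ℂ] E :=
  NormedSpace.exp ((-Complex.I) • ∑ j : Fin k, (c j : ℂ) • P j)

open NormedSpace

private lemma hartree_aux {A : Type*} [NormedRing A] [NormedAlgebra ℂ A] [CompleteSpace A]
    {k : ℕ} (P : Fin k → A) (ν : Fin k → ℝ → ℝ) (t₀ t : ℝ)
    (hPcomm : ∀ i j, Commute (P i) (P j)) (hν : ∀ j, Continuous (ν j))
    (s : Finset (Fin k)) :
    HasDerivAt (fun t : ℝ => exp (∑ j ∈ s, ((∫ u in t₀..t, ν j u : ℝ) : ℂ) • P j))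
      ((∑ j ∈ s, ((ν j t : ℝ) : ℂ) • P j) *
        exp (∑ j ∈ s, ((∫ u in t₀..t, ν j u : ℝ) : ℂ) • P j)) t := by
  induction s using Finset.induction with
  | empty => simpa [exp_zero] using (hasDerivAt_const t (1 : A))
  | insert i s' hi ih =>
    have hci : HasDerivAt (fun t : ℝ => ((∫ u in t₀..t, ν i u : ℝ) : ℂ)) ((ν i t : ℂ)) t :=
      (intervalIntegral.integral_hasDerivAt_right ((hν i).intervalIntegrable t₀ t)
        ((hν i).stronglyMeasurableAtFilter _ _) (hν i).continuousAt).ofReal_comp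
    have hf : HasDerivAt (fun t : ℝ => exp (((∫ u in t₀..t, ν i u : ℝ) : ℂ) • P i))
        ((ν i t : ℂ) • (P i * exp (((∫ u in t₀..t, ν i u : ℝ) : ℂ) • P i))) t :=
      by have := (hasDerivAt_exp_smul_const' (P i) (((∫ u in t₀..t, ν i u : ℝ) : ℂ))).scomp t hci; exact this
    have hcomm : ∀ (a b : Fin k → ℂ), Commute ((a i) • P i) (∑ j ∈ s', (b j) • P j) := by
      intro a b
      exact Commute.sum_right _ _ _ fun j _ => ((hPcomm i j).smul_left _).smul_right _
    have key : ∀ u : ℝ, exp (∑ j ∈ insert i s', ((∫ v in t₀..u, ν j v : ℝ) : ℂ) • P j)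
        = exp (((∫ v in t₀..u, ν i v : ℝ) : ℂ) • P i) *
          exp (∑ j ∈ s', ((∫ v in t₀..u, ν j v : ℝ) : ℂ) • P j) := by
      intro u
      rw [Finset.sum_insert hi]
      letI : NormedAlgebra ℚ A := NormedAlgebra.restrictScalars ℚ ℂ A
      exact exp_add_of_commute
        (hcomm (fun j => ((∫ v in t₀..u, ν j v : ℝ) : ℂ)) (fun j => ((∫ v in t₀..u, ν j v : ℝ) : ℂ)))
    have hmul := hf.mul ih
    have : HasDerivAt (fun u : ℝ =>
        exp (∑ j ∈ insert i s', ((∫ v in t₀..u, ν j v : ℝ) : ℂ) • P j))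
        ((ν i t : ℂ) • (P i * exp (((∫ u in t₀..t, ν i u : ℝ) : ℂ) • P i)) *
            exp (∑ j ∈ s', ((∫ u in t₀..t, ν j u : ℝ) : ℂ) • P j) +
          exp (((∫ u in t₀..t, ν i u : ℝ) : ℂ) • P i) *
            ((∑ j ∈ s', ((ν j t : ℝ) : ℂ) • P j) *
              exp (∑ j ∈ s', ((∫ u in t₀..t, ν j u : ℝ) : ℂ) • P j))) t := by
      simpa only [key, Pi.mul_def] using hmul
    convert this using 1
    rw [key, Finset.sum_insert hi, add_mul]
    congr 1
    · rw [smul_mul_assoc, smul_mul_assoc, mul_assoc]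
    · rw [← mul_assoc, ← mul_assoc]
      congr 1
      exact (((hcomm (fun j => ((∫ v in t₀..t, ν j v : ℝ) : ℂ))
        (fun j => ((ν j t : ℝ) : ℂ))).symm).exp_right).eq


/-- Proposition 2 of the paper: if `φ` satisfies `H(t, φφ*) φ = Σ_j ν_j(t) P_j φ` with
self-adjoint commuting `P_j` and the Hamiltonian is equivariant under the group
`V c = exp(−i Σ_j c_j P_j)`, then the generalized soliton
`ψ t = V (∫_{t₀}^t ν) φ` solves the abstract Hartree equation `ψ' = −i H(t, ψψ*) ψ`. -/
theorem generalized_soliton_solves_hartree {E : Type*} [NormedAddCommGroup E]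
    [InnerProductSpace ℂ E] [CompleteSpace E]
    (k : ℕ) (P : Fin k → (E →L[ℂ] E)) (ν : Fin k → ℝ → ℝ) (t₀ : ℝ) (φ : E)
    (H : ℝ × (E →L[ℂ] E) → (E →L[ℂ] E))
    (hPsa : ∀ j : Fin k, IsSelfAdjoint (P j))
    (hPcomm : ∀ i j : Fin k, P i ∘L P j = P j ∘L P i)
    (hν : ∀ j : Fin k, Continuous (ν j))
    (hstat : ∀ t : ℝ, H (t, outer φ) φ = ∑ j : Fin k, ((ν j t : ℂ) • (P j) φ))
    (hequiv : ∀ (t : ℝ) (c : Fin k → ℝ),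
      H (t, (Vop P c) ∘L (outer φ) ∘L (ContinuousLinearMap.adjoint (Vop P c)))
          ((Vop P c) φ) =
        (Vop P c) (H (t, outer φ) φ)) :
    (fun t : ℝ => (Vop P fun j => ∫ s in t₀..t, ν j s) φ) t₀ = φ ∧
      ∀ t : ℝ, HasDerivAt (fun t : ℝ => (Vop P fun j => ∫ s in t₀..t, ν j s) φ)
        ((-Complex.I) • H (t, outer ((Vop P fun j => ∫ s in t₀..t, ν j s) φ))
          ((Vop P fun j => ∫ s in t₀..t, ν j s) φ)) t := by
  classical
  set c : ℝ → Fin k → ℝ := fun t j => ∫ s in t₀..t, ν j s with hc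
  have hPcomm' : ∀ i j : Fin k, Commute ((-Complex.I) • P i) ((-Complex.I) • P j) := by
    intro i j
    have h : Commute (P i) (P j) := hPcomm i j
    exact (h.smul_left _).smul_right _
  -- rewrite Vop as exp of a sum adapted to the aux lemma
  have hVeq : ∀ t : ℝ, Vop P (c t) =
      NormedSpace.exp (∑ j : Fin k, ((c t j : ℝ) : ℂ) • ((-Complex.I) • P j)) := by
    intro t
    unfold Vop
    congr 1
    rw [Finset.smul_sum]
    exact Finset.sum_congr rfl fun j _ => (smul_comm _ _ _)
  have hSeq : ∀ t : ℝ, (∑ j : Fin k, ((ν j t : ℝ) : ℂ) • ((-Complex.I) • P j)) =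
      (-Complex.I) • ∑ j : Fin k, ((ν j t : ℝ) : ℂ) • P j := by
    intro t
    rw [Finset.smul_sum]
    exact Finset.sum_congr rfl fun j _ => (smul_comm _ _ _)
  have hM : ∀ t : ℝ, HasDerivAt (fun t : ℝ => Vop P (c t))
      (((-Complex.I) • ∑ j : Fin k, ((ν j t : ℝ) : ℂ) • P j) * Vop P (c t)) t := by
    intro t
    have := hartree_aux (fun j => (-Complex.I) • P j) ν t₀ t hPcomm' hν Finset.univ
    simp only [hSeq] at this
    simp only [hVeq]
    simp only [hc]
    exact this
  -- value at t₀
  have hval : Vop P (c t₀) = 1 := by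
    unfold Vop
    simp [hc, intervalIntegral.integral_same, NormedSpace.exp_zero]
  constructor
  · show Vop P (c t₀) φ = φ
    rw [hval]; rfl
  · intro t
    -- derivative of t ↦ (Vop P (c t)) φ
    have hψ : HasDerivAt (fun t : ℝ => Vop P (c t) φ)
        ((((-Complex.I) • ∑ j : Fin k, ((ν j t : ℝ) : ℂ) • P j) * Vop P (c t)) φ) t := by
      have := (((ContinuousLinearMap.apply ℂ E φ).restrictScalars ℝ).hasFDerivAt).comp_hasDerivAt t (hM t)
      simpa [Function.comp_def] using this
    convert hψ using 1
    -- compute the RHS of the Hartree equation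
    have houter : outer (Vop P (c t) φ) =
        (Vop P (c t)) ∘L (outer φ) ∘L (ContinuousLinearMap.adjoint (Vop P (c t))) := by
      ext χ
      simp only [outer, ContinuousLinearMap.smulRight_apply, innerSL_apply_apply,
        ContinuousLinearMap.coe_comp', Function.comp_apply, map_smul]
      congr 1
      rw [ContinuousLinearMap.adjoint_inner_right]
    rw [houter, hequiv t (c t), hstat t]
    -- now: (-I) • V (∑ νⱼ • Pⱼ φ) = ((-I) • ∑ νⱼ • Pⱼ * V) φ
    have hScomm : Commute (∑ j : Fin k, ((ν j t : ℝ) : ℂ) • P j)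
        ((-Complex.I) • ∑ j : Fin k, ((c t j : ℝ) : ℂ) • P j) := by
      refine Commute.sum_left _ _ _ fun i _ => ?_
      refine Commute.smul_right ?_ _
      refine Commute.sum_right _ _ _ fun j _ => ?_
      have h : Commute (P i) (P j) := hPcomm i j
      exact (h.smul_left _).smul_right _
    have hCV : Commute (∑ j : Fin k, ((ν j t : ℝ) : ℂ) • P j) (Vop P (c t)) :=
      hScomm.exp_right
    have hsum : (∑ j : Fin k, ((ν j t : ℝ) : ℂ) • P j) φ
        = ∑ j : Fin k, ((ν j t : ℝ) : ℂ) • (P j) φ := by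
      simp [ContinuousLinearMap.sum_apply]
    calc (-Complex.I) • (Vop P (c t)) (∑ j : Fin k, ((ν j t : ℝ) : ℂ) • (P j) φ)
        = (-Complex.I) • (Vop P (c t)) ((∑ j : Fin k, ((ν j t : ℝ) : ℂ) • P j) φ) := by
          rw [hsum]
      _ = (-Complex.I) • ((Vop P (c t)) * (∑ j : Fin k, ((ν j t : ℝ) : ℂ) • P j)) φ := rfl
      _ = (-Complex.I) • ((∑ j : Fin k, ((ν j t : ℝ) : ℂ) • P j) * (Vop P (c t))) φ := by
          rw [← hCV.eq]
      _ = (((-Complex.I) • ∑ j : Fin k, ((ν j t : ℝ) : ℂ) • P j) * Vop P (c t)) φ := by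
          rw [smul_mul_assoc]
          rfl
end

section
/- Let E be a complex Banach space, t₀ ∈ ℝ, and let A : ℝ → (E →L[ℂ] E) be continuous with pairwise commuting values: A s ∘L A u = A u ∘L A s for all s u. Define B t := ∫ s in t₀..t, A s (Bochner integral in the Banach algebra E →L[ℂ] E). Then for every φ ∈ E the function ψ t := (exp (−Complex.I • B t)) φ satisfies ψ t₀ = φ and, for every t, ψ is differentiable at t with ψ'(t) = −Complex.I • (A t) (ψ t). -/
open intervalIntegral MeasureTheory

section aux

variable {𝔸 : Type*} [NormedRing 𝔸] [NormedAlgebra ℂ 𝔸] [CompleteSpace 𝔸]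

/-- Derivative of `exp ∘ B` when the values of `B` pairwise commute. -/
lemma hasDerivAt_exp_of_commute (B : ℝ → 𝔸) (B' : 𝔸) (t : ℝ)
    (hB : HasDerivAt B B' t) (hc : ∀ s u : ℝ, Commute (B s) (B u)) :
    HasDerivAt (fun s => NormedSpace.exp (B s)) (B' * NormedSpace.exp (B t)) t := by
  have h1 : HasDerivAt (fun h : ℝ => t + h) 1 0 := by
    simpa using (hasDerivAt_id (0 : ℝ)).const_add t
  have h2 : HasDerivAt (fun h : ℝ => B (t + h)) B' 0 := by
    have := hB.scomp_of_eq (0 : ℝ) h1 (by simp)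
    simpa [Function.comp_def] using this
  have hD : HasDerivAt (fun h : ℝ => B (t + h) - B t) B' 0 := by
    simpa using h2.sub_const (B t)
  have hexp0 : HasFDerivAt (NormedSpace.exp)
      ((1 : 𝔸 →L[ℂ] 𝔸).restrictScalars ℝ) ((fun h : ℝ => B (t + h) - B t) 0) := by
    simpa using (hasFDerivAt_exp_zero (𝕂 := ℂ) (𝔸 := 𝔸)).restrictScalars ℝ
  have hDexp : HasDerivAt (fun h : ℝ => NormedSpace.exp (B (t + h) - B t)) B' 0 := by
    have := HasFDerivAt.comp_hasDerivAt (0 : ℝ) hexp0 hD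
    simpa [Function.comp_def] using this
  have hmul : HasDerivAt
      (fun h : ℝ => NormedSpace.exp (B (t + h) - B t) * NormedSpace.exp (B t))
      (B' * NormedSpace.exp (B t)) 0 := hDexp.mul_const _
  have hsub : HasDerivAt (fun s : ℝ => s - t) 1 t := by
    simpa using (hasDerivAt_id t).sub_const t
  have key := hmul.scomp_of_eq t hsub (by simp)
  have funeq : ((fun h : ℝ => NormedSpace.exp (B (t + h) - B t) * NormedSpace.exp (B t))
      ∘ fun s : ℝ => s - t) = fun s : ℝ => NormedSpace.exp (B s) := by
    funext s
    have hco : Commute (B s - B t) (B t) := (hc s t).sub_left (hc t t)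
    simp only [Function.comp]
    rw [add_sub_cancel t s, ← NormedSpace.exp_add_of_commute_of_mem_ball (𝕂 := ℂ) hco
      ((NormedSpace.expSeries_radius_eq_top ℂ 𝔸).symm ▸ edist_lt_top _ _)
      ((NormedSpace.expSeries_radius_eq_top ℂ 𝔸).symm ▸ edist_lt_top _ _), sub_add_cancel]
  rw [funeq] at key
  simpa using key

end aux

/-- If the values of a continuous generator `A : ℝ → E →L[ℂ] E` pairwise commute, the
time-ordered exponential disentangles to the ordinary exponential of the integral:
`ψ t = exp(−i ∫_{t₀}^t A) φ` solves `ψ' = −i A(t) ψ`, `ψ t₀ = φ`. -/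
theorem exp_integral_solves_schrodinger {E : Type*} [NormedAddCommGroup E]
    [NormedSpace ℂ E] [CompleteSpace E]
    (t₀ : ℝ) (A : ℝ → (E →L[ℂ] E))
    (hA : Continuous A)
    (hcomm : ∀ s u : ℝ, A s ∘L A u = A u ∘L A s)
    (φ : E) :
    (fun t : ℝ => (NormedSpace.exp ((-Complex.I) • ∫ s in t₀..t, A s)) φ) t₀ = φ ∧
      ∀ t : ℝ, HasDerivAt
        (fun t : ℝ => (NormedSpace.exp ((-Complex.I) • ∫ s in t₀..t, A s)) φ)
        ((-Complex.I) • (A t) ((NormedSpace.exp ((-Complex.I) • ∫ s in t₀..t, A s)) φ))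
        t := by
  have hcomm' : ∀ s u : ℝ, Commute (A s) (A u) := fun s u => by
    simpa [Commute, SemiconjBy, ContinuousLinearMap.mul_def] using hcomm s u
  have hInt : ∀ a b : ℝ, IntervalIntegrable A MeasureTheory.volume a b := fun a b =>
    hA.intervalIntegrable a b
  -- the integral commutes with each value A u
  have hcommI : ∀ (a b u : ℝ), Commute (∫ s in a..b, A s) (A u) := by
    intro a b u
    have h1 := ContinuousLinearMap.intervalIntegral_comp_comm
      ((ContinuousLinearMap.mul ℂ (E →L[ℂ] E)).flip (A u)) (hInt a b)
    have h2 := ContinuousLinearMap.intervalIntegral_comp_comm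
      (ContinuousLinearMap.mul ℂ (E →L[ℂ] E) (A u)) (hInt a b)
    simp only [ContinuousLinearMap.flip_apply, ContinuousLinearMap.mul_apply'] at h1 h2
    have h3 : (∫ s in a..b, A s * A u) = ∫ s in a..b, A u * A s := by
      congr 1; funext s; exact hcomm' s u
    show (∫ s in a..b, A s) * A u = A u * ∫ s in a..b, A s
    rw [← h1, h3, h2]
  -- integrals commute with integrals
  have hcommII : ∀ (a b c d : ℝ),
      Commute (∫ s in a..b, A s) (∫ s in c..d, A s) := by
    intro a b c d
    have h1 := ContinuousLinearMap.intervalIntegral_comp_comm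
      (ContinuousLinearMap.mul ℂ (E →L[ℂ] E) (∫ s in a..b, A s)) (hInt c d)
    have h2 := ContinuousLinearMap.intervalIntegral_comp_comm
      ((ContinuousLinearMap.mul ℂ (E →L[ℂ] E)).flip (∫ s in a..b, A s)) (hInt c d)
    simp only [ContinuousLinearMap.flip_apply, ContinuousLinearMap.mul_apply'] at h1 h2
    have h3 : (∫ u in c..d, (∫ s in a..b, A s) * A u)
        = ∫ u in c..d, A u * ∫ s in a..b, A s := by
      congr 1; funext u; exact hcommI a b u
    show (∫ s in a..b, A s) * (∫ s in c..d, A s)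
        = (∫ s in c..d, A s) * ∫ s in a..b, A s
    rw [← h1, h3, h2]
  have hMcomm : ∀ s u : ℝ,
      Commute ((-Complex.I) • ∫ x in t₀..s, A x) ((-Complex.I) • ∫ x in t₀..u, A x) :=
    fun s u => ((hcommII t₀ s t₀ u).smul_left _).smul_right _
  constructor
  · simp
  · intro t
    haveI : SecondCountableTopologyEither ℝ (E →L[ℂ] E) :=
      secondCountableTopologyEither_of_left ℝ _
    have hBder : HasDerivAt (fun t => ∫ s in t₀..t, A s) (A t) t :=
      intervalIntegral.integral_hasDerivAt_right (hInt t₀ t)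
        (hA.stronglyMeasurableAtFilter _ _) hA.continuousAt
    have hMder : HasDerivAt (fun t => (-Complex.I) • ∫ s in t₀..t, A s)
        ((-Complex.I) • A t) t := hBder.const_smul (-Complex.I)
    have hexp : HasDerivAt
        (fun u : ℝ => NormedSpace.exp ((-Complex.I) • ∫ s in t₀..u, A s))
        (((-Complex.I) • A t) * NormedSpace.exp ((-Complex.I) • ∫ s in t₀..t, A s)) t :=
      hasDerivAt_exp_of_commute _ _ t hMder hMcomm
    have happ := ((ContinuousLinearMap.apply ℂ E φ).restrictScalars ℝ).hasFDerivAt.comp_hasDerivAt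
      t hexp
    simpa [Function.comp_def, ContinuousLinearMap.smul_apply, ContinuousLinearMap.mul_apply]
      using happ
end
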